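/- For any bipartite graph G with n ≥ 2 vertices and m edges with 1 ≤ m ≤ ⌈n/2⌉·⌊n/2⌋, the degree-based entropy satisfies I_d(G) ≥ 1 + log₂(√m), with equality if and only if G is isomorphic to the disjoint union of a complete bipartite graph K_{q,b} and n − q − b isolated vertices, for some positive integers q, b with qb = m and q + b ≤ n. -/

import Mathlib

open Finset

/-- Degree-based entropy: `I_d(G) = log₂(2m) - (1/(2m)) ∑_v d(v) log₂ d(v)`. -/
noncomputable def degEntropy {V : Type} [Fintype V] (G : SimpleGraph V) : ℝ :=
  Real.logb 2 (2 * (G.edgeSet.ncard : ℝ)) -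
    (1 / (2 * (G.edgeSet.ncard : ℝ))) *
      ∑ v : V, ((G.neighborSet v).ncard : ℝ) * Real.logb 2 ((G.neighborSet v).ncard)

namespace BEAux
variable {n : ℕ} {G : SimpleGraph (Fin n)} [DecidableRel G.Adj] {side : Fin n → Bool}

def EP (G : SimpleGraph (Fin n)) [DecidableRel G.Adj] (side : Fin n → Bool) :
    Finset (Fin n × Fin n) :=
  Finset.univ.filter fun p => G.Adj p.1 p.2 ∧ side p.1 = false

lemma mem_EP {p : Fin n × Fin n} : p ∈ EP G side ↔ G.Adj p.1 p.2 ∧ side p.1 = false := by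
  simp [EP]

def TT (G : SimpleGraph (Fin n)) [DecidableRel G.Adj] (side : Fin n → Bool) :
    Finset ((Fin n × Fin n) × (Fin n × Fin n)) :=
  ((EP G side) ×ˢ (EP G side)).filter fun z => G.Adj z.1.1 z.2.2

lemma exists_equiv (Q R : Finset (Fin n)) (hd : Disjoint Q R) :
    ∃ e : Fin n ≃ (Fin Q.card ⊕ Fin R.card) ⊕ Fin (n - Q.card - R.card),
      (∀ v, v ∈ Q ↔ ∃ i, e v = Sum.inl (Sum.inl i)) ∧
      (∀ v, v ∈ R ↔ ∃ j, e v = Sum.inl (Sum.inr j)) := by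
  classical
  set C : Finset (Fin n) := (Q ∪ R)ᶜ with hCdef
  have hcard : Q.card + R.card ≤ n := by
    have h1 := Finset.card_le_univ (Q ∪ R)
    rw [Finset.card_union_of_disjoint hd] at h1
    simpa using h1
  have hC : C.card = n - Q.card - R.card := by
    rw [hCdef, Finset.card_compl, Finset.card_union_of_disjoint hd]
    simp [Nat.sub_sub]
  let f : (Fin Q.card ⊕ Fin R.card) ⊕ Fin (n - Q.card - R.card) → Fin n :=
    Sum.elim (Sum.elim (fun i => (Q.orderIsoOfFin rfl i : Fin n))
      (fun j => (R.orderIsoOfFin rfl j : Fin n))) (fun k => (C.orderIsoOfFin hC k : Fin n))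
  have hfQ : ∀ i, f (Sum.inl (Sum.inl i)) ∈ Q := fun i => (Q.orderIsoOfFin rfl i).2
  have hfR : ∀ j, f (Sum.inl (Sum.inr j)) ∈ R := fun j => (R.orderIsoOfFin rfl j).2
  have hfC : ∀ k, f (Sum.inr k) ∈ C := fun k => (C.orderIsoOfFin hC k).2
  have hQC : ∀ v, v ∈ Q → v ∉ C := by
    intro v hv hc
    rw [hCdef, Finset.mem_compl] at hc
    exact hc (Finset.mem_union_left _ hv)
  have hRC : ∀ v, v ∈ R → v ∉ C := by
    intro v hv hc
    rw [hCdef, Finset.mem_compl] at hc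
    exact hc (Finset.mem_union_right _ hv)
  have hQR := Finset.disjoint_left.1 hd
  have hinj : Function.Injective f := by
    rintro ((i|j)|k) ((i'|j')|k') h
    · have : i = i' := (Q.orderIsoOfFin rfl).injective (Subtype.ext h)
      rw [this]
    · exact absurd (hfQ i) (fun hq => hQR hq (h ▸ hfR j'))
    · exact absurd (hfQ i) (fun hq => hQC _ hq (h ▸ hfC k'))
    · exact absurd (hfQ i') (fun hq => hQR hq (h ▸ hfR j))
    · have : j = j' := (R.orderIsoOfFin rfl).injective (Subtype.ext h)
      rw [this]
    · exact absurd (hfR j) (fun hr => hRC _ hr (h ▸ hfC k'))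
    · exact absurd (hfQ i') (fun hq => hQC _ hq (h.symm ▸ hfC k))
    · exact absurd (hfR j') (fun hr => hRC _ hr (h.symm ▸ hfC k))
    · have : k = k' := (C.orderIsoOfFin hC).injective (Subtype.ext h)
      rw [this]
  have hbij : Function.Bijective f := by
    rw [Fintype.bijective_iff_injective_and_card]
    refine ⟨hinj, ?_⟩
    simp only [Fintype.card_sum, Fintype.card_fin]
    omega
  refine ⟨(Equiv.ofBijective f hbij).symm, fun v => ⟨fun hv => ?_, ?_⟩, fun v => ⟨fun hv => ?_, ?_⟩⟩
  · obtain ⟨i, hi⟩ := (Q.orderIsoOfFin rfl).surjective ⟨v, hv⟩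
    exact ⟨i, by
      rw [Equiv.symm_apply_eq]
      show v = f (Sum.inl (Sum.inl i))
      exact (congrArg Subtype.val hi).symm⟩
  · rintro ⟨i, hi⟩
    rw [Equiv.symm_apply_eq] at hi
    rw [hi]
    exact hfQ i
  · obtain ⟨j, hj⟩ := (R.orderIsoOfFin rfl).surjective ⟨v, hv⟩
    exact ⟨j, by
      rw [Equiv.symm_apply_eq]
      show v = f (Sum.inl (Sum.inr j))
      exact (congrArg Subtype.val hj).symm⟩
  · rintro ⟨j, hj⟩
    rw [Equiv.symm_apply_eq] at hj
    rw [hj]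
    exact hfR j

section bip
variable (hbip : ∀ u v : Fin n, G.Adj u v → side u ≠ side v)
include hbip

lemma side_snd {p : Fin n × Fin n} (hp : p ∈ EP G side) : side p.2 = true := by
  rcases mem_EP.1 hp with ⟨ha, hs⟩
  have h2 := hbip _ _ ha
  rw [hs] at h2
  exact Bool.ne_false_iff.mp (Ne.symm h2)

lemma card_EP : (EP G side).card = G.edgeFinset.card := by
  apply Finset.card_nbij (fun p => s(p.1, p.2))
  · intro p hp
    rcases mem_EP.1 hp with ⟨ha, _⟩
    simpa using ha
  · intro p hp q hq h
    simp only [Finset.mem_coe] at hp hq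
    rcases Sym2.eq_iff.1 h with ⟨h1, h2⟩ | ⟨h1, h2⟩
    · exact Prod.ext h1 h2
    · exfalso
      have hsp := (mem_EP.1 hp).2
      have hsq2 := side_snd hbip hq
      rw [h1] at hsp; rw [hsp] at hsq2; exact Bool.false_ne_true hsq2
  · intro e he
    simp only [Finset.coe_filter, SimpleGraph.mem_edgeFinset, Finset.mem_coe] at he ⊢
    induction e with
    | _ x y =>
      rw [SimpleGraph.mem_edgeSet] at he
      rcases Bool.eq_false_or_eq_true (side x) with hx | hx
      · have : side y = false := by
          have h2 := hbip _ _ he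
          rw [hx] at h2
          exact Bool.eq_false_iff.mpr (Ne.symm h2)
        exact ⟨(y, x), mem_EP.2 ⟨he.symm, this⟩, Sym2.eq_swap⟩
      · exact ⟨(x, y), mem_EP.2 ⟨he, hx⟩, rfl⟩

lemma sum_deg (g : Fin n → ℝ) :
    ∑ v, (G.degree v : ℝ) * g v = ∑ p ∈ EP G side, (g p.1 + g p.2) := by
  classical
  have h1 : ∑ p ∈ Finset.univ.filter (fun p : Fin n × Fin n => G.Adj p.1 p.2), g p.1
      = ∑ v, (G.degree v : ℝ) * g v := by
    rw [Finset.sum_filter, Fintype.sum_prod_type]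
    refine Finset.sum_congr rfl fun a _ => ?_
    have h : ∑ b, (if G.Adj a b then g a else 0)
        = ∑ b ∈ Finset.univ.filter (fun b => G.Adj a b), g a := by
      rw [Finset.sum_filter]
    rw [h, Finset.sum_const, ← SimpleGraph.neighborFinset_eq_filter, nsmul_eq_mul]
    rfl
  have hsplit : Finset.univ.filter (fun p : Fin n × Fin n => G.Adj p.1 p.2)
      = EP G side ∪ (EP G side).image Prod.swap := by
    ext p
    simp only [Finset.mem_filter, Finset.mem_univ, true_and, Finset.mem_union,
      Finset.mem_image, mem_EP]
    constructor
    · intro ha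
      rcases Bool.eq_false_or_eq_true (side p.1) with hs | hs
      · refine Or.inr ⟨p.swap, ⟨ha.symm, ?_⟩, Prod.swap_swap p⟩
        have h2 := hbip _ _ ha
        rw [hs] at h2
        simp only [Prod.fst_swap]
        exact Bool.eq_false_iff.mpr (Ne.symm h2)
      · exact Or.inl ⟨ha, hs⟩
    · rintro (⟨ha, _⟩ | ⟨q, ⟨ha, _⟩, rfl⟩)
      · exact ha
      · exact ha.symm
  have hdisj : Disjoint (EP G side) ((EP G side).image Prod.swap) := by
    rw [Finset.disjoint_left]
    intro p hp hq
    rcases Finset.mem_image.1 hq with ⟨q, hq', hs⟩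
    have h1 := (mem_EP.1 hp).2
    have h2 := side_snd hbip hq'
    rw [← hs] at h1
    simp only [Prod.fst_swap] at h1
    rw [h1] at h2
    exact Bool.false_ne_true h2
  have himg : ∑ p ∈ (EP G side).image Prod.swap, g p.1 = ∑ p ∈ EP G side, g p.2 := by
    rw [Finset.sum_image (fun a _ b _ h => Prod.swap_injective h)]
    rfl
  rw [← h1, hsplit, Finset.sum_union hdisj, himg, ← Finset.sum_add_distrib]

lemma cardA {a : Fin n} (ha : side a = false) :
    ((EP G side).filter fun q => q.1 = a).card = G.degree a := by
  rw [← SimpleGraph.card_neighborFinset_eq_degree]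
  apply Finset.card_nbij (fun q => q.2)
  · intro q hq
    rcases Finset.mem_filter.1 hq with ⟨hq', rfl⟩
    simpa [SimpleGraph.mem_neighborFinset] using (mem_EP.1 hq').1
  · intro q hq r hr h
    simp only [Finset.mem_coe, Finset.mem_filter] at hq hr
    exact Prod.ext (hq.2.trans hr.2.symm) h
  · intro w hw
    simp only [Finset.mem_coe, SimpleGraph.mem_neighborFinset] at hw
    exact ⟨(a, w), Finset.mem_coe.2 (Finset.mem_filter.2 ⟨mem_EP.2 ⟨hw, ha⟩, rfl⟩), rfl⟩

lemma cardB {b : Fin n} (hb : side b = true) :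
    ((EP G side).filter fun r => r.2 = b).card = G.degree b := by
  rw [← SimpleGraph.card_neighborFinset_eq_degree]
  apply Finset.card_nbij (fun q => q.1)
  · intro q hq
    rcases Finset.mem_filter.1 hq with ⟨hq', h2⟩
    have := (mem_EP.1 hq').1
    rw [h2] at this
    simpa [SimpleGraph.mem_neighborFinset] using this.symm
  · intro q hq r hr h
    simp only [Finset.mem_coe, Finset.mem_filter] at hq hr
    exact Prod.ext h (hq.2.trans hr.2.symm)
  · intro y hy
    simp only [Finset.mem_coe, SimpleGraph.mem_neighborFinset] at hy
    have hys : side y = false := by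
      have h2 := hbip _ _ hy.symm
      rw [hb] at h2
      exact Bool.eq_false_iff.mpr h2
    exact ⟨(y, b), Finset.mem_coe.2 (Finset.mem_filter.2 ⟨mem_EP.2 ⟨hy.symm, hys⟩, rfl⟩), rfl⟩

lemma card_TT : (TT G side).card = ∑ p ∈ EP G side, G.degree p.1 * G.degree p.2 := by
  classical
  have hT : TT G side = (EP G side).biUnion
      (fun p => ((EP G side).filter fun q => q.1 = p.1) ×ˢ ((EP G side).filter fun r => r.2 = p.2)) := by
    ext z
    simp only [TT, Finset.mem_filter, Finset.mem_product, Finset.mem_biUnion]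
    constructor
    · rintro ⟨⟨hq, hr⟩, hadj⟩
      refine ⟨(z.1.1, z.2.2), mem_EP.2 ⟨hadj, (mem_EP.1 hq).2⟩, ⟨hq, rfl⟩, ⟨hr, rfl⟩⟩
    · rintro ⟨p, hp, ⟨hq, hq1⟩, ⟨hr, hr2⟩⟩
      refine ⟨⟨hq, hr⟩, ?_⟩
      rw [hq1, hr2]
      exact (mem_EP.1 hp).1
  rw [hT, Finset.card_biUnion]
  · refine Finset.sum_congr rfl fun p hp => ?_
    rw [Finset.card_product, cardA hbip (mem_EP.1 hp).2, cardB hbip (side_snd hbip hp)]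
  · intro p hp p' hp' hne
    rw [Function.onFun, Finset.disjoint_left]
    rintro z hz hz'
    simp only [Finset.mem_product, Finset.mem_filter] at hz hz'
    exact hne (Prod.ext (hz.1.2.symm.trans hz'.1.2) (hz.2.2.symm.trans hz'.2.2))

lemma sum_dd_le : ∑ p ∈ EP G side, G.degree p.1 * G.degree p.2 ≤ (EP G side).card ^ 2 := by
  rw [← card_TT hbip, sq, ← Finset.card_product]
  exact Finset.card_le_card (Finset.filter_subset _ _)

lemma full_of_eq (h : ∑ p ∈ EP G side, G.degree p.1 * G.degree p.2 = (EP G side).card ^ 2) :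
    ∀ p ∈ EP G side, ∀ q ∈ EP G side, G.Adj p.1 q.2 := by
  have hTfull : TT G side = (EP G side) ×ˢ (EP G side) := by
    apply Finset.eq_of_subset_of_card_le (Finset.filter_subset _ _)
    have hc := card_TT hbip (side := side)
    rw [TT] at hc
    rw [hc, h, sq, Finset.card_product]
  intro p hp q hq
  have : (p, q) ∈ TT G side := by
    rw [hTfull]; exact Finset.mem_product.2 ⟨hp, hq⟩
  exact (Finset.mem_filter.1 this).2

lemma structure_of_full
    (hfull : ∀ p ∈ EP G side, ∀ q ∈ EP G side, G.Adj p.1 q.2)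
    (hne : (EP G side).Nonempty) :
    ∃ q b : ℕ, 0 < q ∧ 0 < b ∧ q * b = (EP G side).card ∧ q + b ≤ n ∧
      Nonempty (G ≃g (completeBipartiteGraph (Fin q) (Fin b) ⊕g
        (⊥ : SimpleGraph (Fin (n - q - b))))) := by
  classical
  set Q : Finset (Fin n) := Finset.univ.filter (fun v => side v = false ∧ ∃ w, G.Adj v w) with hQdef
  set R : Finset (Fin n) := Finset.univ.filter (fun v => side v = true ∧ ∃ w, G.Adj v w) with hRdef
  have hmemQ : ∀ v, v ∈ Q ↔ side v = false ∧ ∃ w, G.Adj v w := by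
    intro v; simp [hQdef]
  have hmemR : ∀ v, v ∈ R ↔ side v = true ∧ ∃ w, G.Adj v w := by
    intro v; simp [hRdef]
  have hd : Disjoint Q R := by
    rw [Finset.disjoint_left]
    intro v hv hv'
    rw [hmemQ] at hv; rw [hmemR] at hv'
    rw [hv.1] at hv'
    exact Bool.false_ne_true hv'.1
  have hadj : ∀ a ∈ Q, ∀ c ∈ R, G.Adj a c := by
    intro a ha c hc
    rw [hmemQ] at ha; rw [hmemR] at hc
    obtain ⟨hsa, x, hx⟩ := ha
    obtain ⟨hsc, y, hy⟩ := hc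
    have hys : side y = false := by
      have h2 := hbip _ _ hy
      rw [hsc] at h2
      exact Bool.eq_false_iff.mpr (Ne.symm h2)
    exact hfull (a, x) (mem_EP.2 ⟨hx, hsa⟩) (y, c) (mem_EP.2 ⟨hy.symm, hys⟩)
  have hchar : ∀ u v, G.Adj u v ↔ ((u ∈ Q ∧ v ∈ R) ∨ (v ∈ Q ∧ u ∈ R)) := by
    intro u v
    constructor
    · intro h
      rcases Bool.eq_false_or_eq_true (side u) with hs | hs
      · have hv : side v = false := by
          have h2 := hbip _ _ h; rw [hs] at h2
          exact Bool.eq_false_iff.mpr (Ne.symm h2)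
        exact Or.inr ⟨(hmemQ v).2 ⟨hv, u, h.symm⟩, (hmemR u).2 ⟨hs, v, h⟩⟩
      · have hv : side v = true := by
          have h2 := hbip _ _ h; rw [hs] at h2
          exact Bool.ne_false_iff.mp (Ne.symm h2)
        exact Or.inl ⟨(hmemQ u).2 ⟨hs, v, h⟩, (hmemR v).2 ⟨hv, u, h.symm⟩⟩
    · rintro (⟨h1, h2⟩ | ⟨h1, h2⟩)
      · exact hadj _ h1 _ h2
      · exact (hadj _ h1 _ h2).symm
  have hEP : EP G side = Q ×ˢ R := by
    ext p
    rw [mem_EP, Finset.mem_product, hmemQ, hmemR]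
    constructor
    · rintro ⟨ha, hs⟩
      exact ⟨⟨hs, p.2, ha⟩, side_snd hbip (mem_EP.2 ⟨ha, hs⟩), p.1, ha.symm⟩
    · rintro ⟨⟨hs1, _⟩, hs2, _⟩
      exact ⟨hadj _ ((hmemQ p.1).2 ⟨hs1, ‹_›⟩) _ ((hmemR p.2).2 ⟨hs2, ‹_›⟩), hs1⟩
  obtain ⟨p, hp⟩ := hne
  have hpQ : p.1 ∈ Q := by
    rw [hEP] at hp; exact (Finset.mem_product.1 hp).1
  have hpR : p.2 ∈ R := by
    rw [hEP] at hp; exact (Finset.mem_product.1 hp).2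
  have hcardsum : Q.card + R.card ≤ n := by
    have h1 := Finset.card_le_univ (Q ∪ R)
    rw [Finset.card_union_of_disjoint hd] at h1
    simpa using h1
  obtain ⟨e, heQ, heR⟩ := exists_equiv Q R hd
  refine ⟨Q.card, R.card, Finset.card_pos.2 ⟨p.1, hpQ⟩, Finset.card_pos.2 ⟨p.2, hpR⟩,
    by rw [hEP, Finset.card_product], hcardsum, ⟨⟨e, ?_⟩⟩⟩
  intro u v
  show (completeBipartiteGraph _ _ ⊕g _).Adj (e u) (e v) ↔ G.Adj u v
  rw [hchar u v]
  have key : ∀ x y : (Fin Q.card ⊕ Fin R.card) ⊕ Fin (n - Q.card - R.card),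
      (completeBipartiteGraph (Fin Q.card) (Fin R.card) ⊕g
        (⊥ : SimpleGraph (Fin (n - Q.card - R.card)))).Adj x y ↔
      (((∃ i, x = Sum.inl (Sum.inl i)) ∧ (∃ j, y = Sum.inl (Sum.inr j))) ∨
       ((∃ j, x = Sum.inl (Sum.inr j)) ∧ (∃ i, y = Sum.inl (Sum.inl i)))) := by
    rintro ((i|j)|k) ((i'|j')|k') <;> simp
  rw [key, ← heQ u, ← heR v, ← heR u, ← heQ v]
  tauto

end bip

lemma nbr_set_H {q b c : ℕ} (i : Fin q) :
    ((completeBipartiteGraph (Fin q) (Fin b) ⊕g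
      (⊥ : SimpleGraph (Fin c))).neighborSet (Sum.inl (Sum.inl i)))
    = Set.range (fun j : Fin b => (Sum.inl (Sum.inr j) : (Fin q ⊕ Fin b) ⊕ Fin c)) := by
  ext x
  simp only [SimpleGraph.mem_neighborSet, Set.mem_range]
  rcases x with (i'|j')|k' <;> simp

lemma nbr_set_H' {q b c : ℕ} (j : Fin b) :
    ((completeBipartiteGraph (Fin q) (Fin b) ⊕g
      (⊥ : SimpleGraph (Fin c))).neighborSet (Sum.inl (Sum.inr j)))
    = Set.range (fun i : Fin q => (Sum.inl (Sum.inl i) : (Fin q ⊕ Fin b) ⊕ Fin c)) := by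
  ext x
  simp only [SimpleGraph.mem_neighborSet, Set.mem_range]
  rcases x with (i'|j')|k' <;> simp

lemma nbr_set_H'' {q b c : ℕ} (k : Fin c) :
    ((completeBipartiteGraph (Fin q) (Fin b) ⊕g
      (⊥ : SimpleGraph (Fin c))).neighborSet (Sum.inr k)) = ∅ := by
  ext x
  simp only [SimpleGraph.mem_neighborSet, Set.mem_empty_iff_false, iff_false]
  rcases x with (i'|j')|k' <;> simp

lemma ncard_range_inlinr {q b c : ℕ} :
    (Set.range (fun j : Fin b => (Sum.inl (Sum.inr j) : (Fin q ⊕ Fin b) ⊕ Fin c))).ncard = b := by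
  rw [Set.ncard_eq_toFinset_card']
  simp [Set.toFinset_range]
  rw [Finset.card_image_of_injective]
  · simp
  · intro x y h; simpa using h

lemma ncard_range_inlinl {q b c : ℕ} :
    (Set.range (fun i : Fin q => (Sum.inl (Sum.inl i) : (Fin q ⊕ Fin b) ⊕ Fin c))).ncard = q := by
  rw [Set.ncard_eq_toFinset_card']
  simp [Set.toFinset_range]
  rw [Finset.card_image_of_injective]
  · simp
  · intro x y h; simpa using h

lemma sum_iso {n q b c : ℕ} (hq : 0 < q) (hb : 0 < b) {G : SimpleGraph (Fin n)}
    (φ : G ≃g (completeBipartiteGraph (Fin q) (Fin b) ⊕g (⊥ : SimpleGraph (Fin c)))) :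
    ∑ v : Fin n, ((G.neighborSet v).ncard : ℝ) * Real.logb 2 ((G.neighborSet v).ncard)
      = (q * b : ℕ) * Real.logb 2 ((q * b : ℕ)) := by
  classical
  set H := completeBipartiteGraph (Fin q) (Fin b) ⊕g (⊥ : SimpleGraph (Fin c)) with hH
  have hdeg : ∀ v, (G.neighborSet v).ncard = (H.neighborSet (φ v)).ncard := by
    intro v
    rw [← Nat.card_coe_set_eq, ← Nat.card_coe_set_eq]
    exact Nat.card_congr (φ.mapNeighborSet v)
  have h1 : ∑ v : Fin n, ((G.neighborSet v).ncard : ℝ) * Real.logb 2 ((G.neighborSet v).ncard)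
      = ∑ w : (Fin q ⊕ Fin b) ⊕ Fin c,
          ((H.neighborSet w).ncard : ℝ) * Real.logb 2 ((H.neighborSet w).ncard) := by
    rw [← Equiv.sum_comp φ.toEquiv
      (fun w => ((H.neighborSet w).ncard : ℝ) * Real.logb 2 ((H.neighborSet w).ncard))]
    exact Finset.sum_congr rfl fun v _ => by rw [hdeg v]; rfl
  rw [h1, Fintype.sum_sum_type, Fintype.sum_sum_type]
  have e1 : ∀ i : Fin q, (H.neighborSet (Sum.inl (Sum.inl i))).ncard = b := fun i => by
    rw [hH, nbr_set_H, ncard_range_inlinr]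
  have e2 : ∀ j : Fin b, (H.neighborSet (Sum.inl (Sum.inr j))).ncard = q := fun j => by
    rw [hH, nbr_set_H', ncard_range_inlinl]
  have e3 : ∀ k : Fin c, (H.neighborSet (Sum.inr k)).ncard = 0 := fun k => by
    rw [hH, nbr_set_H'']; simp
  simp only [e1, e2, e3]
  rw [Finset.sum_const, Finset.sum_const, Finset.sum_const]
  simp only [Finset.card_univ, Fintype.card_fin, Nat.cast_zero, Real.logb_zero,
    zero_mul, smul_zero, add_zero, nsmul_eq_mul]
  have hq' : (q : ℝ) ≠ 0 := Nat.cast_ne_zero.2 hq.ne'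
  have hb' : (b : ℝ) ≠ 0 := Nat.cast_ne_zero.2 hb.ne'
  rw [Nat.cast_mul, Real.logb_mul hq' hb']
  ring

end BEAux

theorem bipartite_entropy_lower_bound {n m : ℕ} (hn : 2 ≤ n) (hm1 : 1 ≤ m)
    (hm2 : m ≤ (n + 1) / 2 * (n / 2))
    (G : SimpleGraph (Fin n)) (side : Fin n → Bool)
    (hbip : ∀ u v : Fin n, G.Adj u v → side u ≠ side v)
    (hGm : G.edgeSet.ncard = m) :
    1 + Real.logb 2 (Real.sqrt m) ≤ degEntropy G ∧
      (degEntropy G = 1 + Real.logb 2 (Real.sqrt m) ↔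
        ∃ q b : ℕ, 0 < q ∧ 0 < b ∧ q * b = m ∧ q + b ≤ n ∧
          Nonempty (G ≃g (completeBipartiteGraph (Fin q) (Fin b) ⊕g
            (⊥ : SimpleGraph (Fin (n - q - b)))))) := by
  classical
  have hm0 : (0:ℝ) < m := by exact_mod_cast hm1
  have hlog2 : (0:ℝ) < Real.log 2 := Real.log_pos (by norm_num)
  -- edge count as finset card
  have hedge : G.edgeFinset.card = m := by
    rw [← hGm, SimpleGraph.edgeFinset, Set.ncard_eq_toFinset_card']
  set E := BEAux.EP G side with hE
  have hEcard : E.card = m := by rw [hE, BEAux.card_EP hbip, hedge]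
  -- degrees
  have hncard : ∀ v, (G.neighborSet v).ncard = G.degree v := by
    intro v
    rw [Set.ncard_eq_toFinset_card', SimpleGraph.degree, SimpleGraph.neighborFinset_def]
  set S : ℝ := ∑ v : Fin n, ((G.neighborSet v).ncard : ℝ) * Real.logb 2 ((G.neighborSet v).ncard)
    with hSdef
  have hS1 : S = ∑ p ∈ E, (Real.logb 2 (G.degree p.1) + Real.logb 2 (G.degree p.2)) := by
    rw [hSdef]
    have : ∀ v : Fin n, ((G.neighborSet v).ncard : ℝ) * Real.logb 2 ((G.neighborSet v).ncard)
        = (G.degree v : ℝ) * Real.logb 2 (G.degree v) := fun v => by rw [hncard v]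
    rw [Finset.sum_congr rfl fun v _ => this v]
    exact BEAux.sum_deg hbip _
  -- degrees positive on E
  have hdpos1 : ∀ p ∈ E, 0 < G.degree p.1 := by
    intro p hp
    rw [← SimpleGraph.card_neighborFinset_eq_degree, Finset.card_pos]
    exact ⟨p.2, (SimpleGraph.mem_neighborFinset _ _ _).2 (BEAux.mem_EP.1 hp).1⟩
  have hdpos2 : ∀ p ∈ E, 0 < G.degree p.2 := by
    intro p hp
    rw [← SimpleGraph.card_neighborFinset_eq_degree, Finset.card_pos]
    exact ⟨p.1, (SimpleGraph.mem_neighborFinset _ _ _).2 (BEAux.mem_EP.1 hp).1.symm⟩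
  -- the natural number sum
  set Z : ℕ := ∑ p ∈ E, G.degree p.1 * G.degree p.2 with hZdef
  have hZle : Z ≤ m ^ 2 := by
    rw [hZdef, ← hEcard]
    exact BEAux.sum_dd_le hbip
  -- log-sum
  set L : ℝ := ∑ p ∈ E, (Real.log (G.degree p.1) + Real.log (G.degree p.2)) with hLdef
  have hSL : S = L / Real.log 2 := by
    rw [hS1, hLdef, Finset.sum_div]
    exact Finset.sum_congr rfl fun p hp => by rw [Real.logb, Real.logb, add_div]
  have hterm : ∀ p ∈ E, Real.log (G.degree p.1) + Real.log (G.degree p.2)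
      ≤ Real.log m + ((G.degree p.1 * G.degree p.2 : ℕ) : ℝ) / m - 1 := by
    intro p hp
    have h1 : (0:ℝ) < G.degree p.1 := by exact_mod_cast hdpos1 p hp
    have h2 : (0:ℝ) < G.degree p.2 := by exact_mod_cast hdpos2 p hp
    have hz : (0:ℝ) < ((G.degree p.1 * G.degree p.2 : ℕ) : ℝ) := by
      push_cast; positivity
    have hineq := Real.log_le_sub_one_of_pos (x := ((G.degree p.1 * G.degree p.2 : ℕ) : ℝ) / m)
      (div_pos hz hm0)
    rw [Real.log_div hz.ne' hm0.ne'] at hineq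
    have hlogmul : Real.log ((G.degree p.1 * G.degree p.2 : ℕ) : ℝ)
        = Real.log (G.degree p.1) + Real.log (G.degree p.2) := by
      push_cast
      exact Real.log_mul h1.ne' h2.ne'
    rw [hlogmul] at hineq
    linarith
  have hLle : L ≤ m * Real.log m := by
    have hcalc : L ≤ ∑ p ∈ E, (Real.log m + ((G.degree p.1 * G.degree p.2 : ℕ) : ℝ) / m - 1) :=
      Finset.sum_le_sum hterm
    have hsum : ∑ p ∈ E, (Real.log m + ((G.degree p.1 * G.degree p.2 : ℕ) : ℝ) / m - 1)
        = m * Real.log m + (Z : ℝ) / m - m := by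
      rw [Finset.sum_sub_distrib, Finset.sum_add_distrib, Finset.sum_const, Finset.sum_const,
        hEcard, ← Finset.sum_div]
      have : ∑ p ∈ E, ((G.degree p.1 * G.degree p.2 : ℕ) : ℝ) = (Z : ℝ) := by
        rw [hZdef]; push_cast; rfl
      rw [this]
      simp [nsmul_eq_mul]
    have hZr : (Z : ℝ) ≤ (m : ℝ) ^ 2 := by exact_mod_cast hZle
    have : (Z : ℝ) / m ≤ m := by
      rw [div_le_iff₀ hm0]
      nlinarith
    linarith [hcalc, hsum ▸ hcalc]
  -- main bound on S
  have hSle : S ≤ m * Real.logb 2 m := by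
    rw [hSL, Real.logb]
    rw [div_le_iff₀ hlog2]
    calc L ≤ m * Real.log m := hLle
    _ = m * (Real.log m / Real.log 2) * Real.log 2 := by field_simp
  -- equality cases
  have hforward : S = m * Real.logb 2 m →
      ∃ q b : ℕ, 0 < q ∧ 0 < b ∧ q * b = m ∧ q + b ≤ n ∧
        Nonempty (G ≃g (completeBipartiteGraph (Fin q) (Fin b) ⊕g
          (⊥ : SimpleGraph (Fin (n - q - b))))) := by
    intro hSeq
    have hLeq : L = m * Real.log m := by
      have : L / Real.log 2 = m * (Real.log m / Real.log 2) := by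
        rw [← hSL, hSeq, Real.logb]
      field_simp at this
      linarith
    -- derive Z = m^2
    have hZeq : Z = m ^ 2 := by
      have hcalc : L ≤ m * Real.log m + (Z : ℝ) / m - m := by
        have h1 : L ≤ ∑ p ∈ E, (Real.log m + ((G.degree p.1 * G.degree p.2 : ℕ) : ℝ) / m - 1) :=
          Finset.sum_le_sum hterm
        have hsum : ∑ p ∈ E, (Real.log m + ((G.degree p.1 * G.degree p.2 : ℕ) : ℝ) / m - 1)
            = m * Real.log m + (Z : ℝ) / m - m := by
          rw [Finset.sum_sub_distrib, Finset.sum_add_distrib, Finset.sum_const, Finset.sum_const,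
            hEcard, ← Finset.sum_div]
          have : ∑ p ∈ E, ((G.degree p.1 * G.degree p.2 : ℕ) : ℝ) = (Z : ℝ) := by
            rw [hZdef]; push_cast; rfl
          rw [this]
          simp [nsmul_eq_mul]
        linarith [hsum ▸ h1]
      have hge : (m:ℝ)^2 ≤ (Z:ℝ) := by
        rw [hLeq] at hcalc
        have : (m:ℝ) ≤ (Z:ℝ)/m := by linarith
        rw [le_div_iff₀ hm0] at this
        nlinarith
      have hge' : m ^ 2 ≤ Z := by exact_mod_cast hge
      omega
    have hfull := BEAux.full_of_eq hbip (by rw [← hZdef, hZeq, hEcard])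
    have hne : E.Nonempty := Finset.card_pos.1 (by rw [hEcard]; omega)
    obtain ⟨q, b, hq, hb, hqb, hqbn, hiso⟩ := BEAux.structure_of_full hbip hfull hne
    exact ⟨q, b, hq, hb, by rw [hqb, hEcard], hqbn, hiso⟩
  have hbackward : (∃ q b : ℕ, 0 < q ∧ 0 < b ∧ q * b = m ∧ q + b ≤ n ∧
      Nonempty (G ≃g (completeBipartiteGraph (Fin q) (Fin b) ⊕g
        (⊥ : SimpleGraph (Fin (n - q - b)))))) → S = m * Real.logb 2 m := by
    rintro ⟨q, b, hq, hb, hqb, hqbn, ⟨φ⟩⟩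
    have := BEAux.sum_iso hq hb φ
    rw [hSdef, this, hqb]
  -- final arithmetic
  have hdegE : degEntropy G = (1 + Real.logb 2 m) - (1 / (2 * m)) * S := by
    rw [degEntropy, hGm, ← hSdef]
    congr 1
    rw [Real.logb_mul (by norm_num) hm0.ne', Real.logb_self_eq_one (by norm_num)]
  have hsqrt : Real.logb 2 (Real.sqrt m) = Real.logb 2 m / 2 := by
    rw [Real.logb, Real.logb, Real.log_sqrt hm0.le]
    ring
  constructor
  · rw [hdegE, hsqrt]
    have h1 : (1 / (2 * (m:ℝ))) * S ≤ (1 / (2 * (m:ℝ))) * (m * Real.logb 2 m) :=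
      mul_le_mul_of_nonneg_left hSle (by positivity)
    have h2 : (1 / (2 * (m:ℝ))) * (m * Real.logb 2 m) = Real.logb 2 m / 2 := by
      field_simp
    linarith
  · rw [hdegE, hsqrt]
    constructor
    · intro h
      apply hforward
      have h2 : (1 / (2 * (m:ℝ))) * S = Real.logb 2 m / 2 := by linarith
      have hm2' : (2 * (m:ℝ)) ≠ 0 := by positivity
      field_simp at h2
      linarith
    · intro h
      have := hbackward h
      rw [this]
      field_simp
      ring
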